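/- Let n >= 1, let u be a permutation in the symmetric group S_n acting on C^n by permuting coordinates (via its permutation matrix), and let zeta be a complex root of unity of multiplicative order d with d >= 2. Then the algebraic multiplicity of zeta as an eigenvalue of the permutation matrix of u equals the number of cycles of u whose length is divisible by d. -/

import Mathlib

open Polynomial Equiv Module

variable {α : Type*} [Fintype α] [DecidableEq α]

noncomputable def permEndHom (α : Type*) : Perm α →* Module.End ℂ (α → ℂ) where
  toFun σ := LinearMap.funLeft ℂ ℂ ⇑σ⁻¹
  map_one' := by ext v x; simp [LinearMap.funLeft]
  map_mul' σ τ := by ext v x; simp [LinearMap.funLeft]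

lemma charpoly_permEnd_one : (permEndHom α 1).charpoly = (X - 1) ^ Fintype.card α := by
  rw [map_one]
  have h1 : (1 : Module.End ℂ (α → ℂ)) = LinearMap.id := rfl
  rw [h1, ← LinearMap.charpoly_toMatrix LinearMap.id (Pi.basisFun ℂ α),
    LinearMap.toMatrix_id]
  unfold Matrix.charpoly
  have : Matrix.charmatrix (1 : Matrix α α ℂ) = Matrix.diagonal (fun _ => (X - 1 : ℂ[X])) := by
    ext i j
    by_cases h : i = j <;>
      simp [Matrix.charmatrix, Matrix.diagonal, Matrix.one_apply, h]
  rw [this, Matrix.det_diagonal]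
  simp [Finset.card_univ]

lemma charpoly_permEnd_cycleOn {β : Type*} [Fintype β] [DecidableEq β] [Nonempty β]
    (σ : Perm β) (hσ : σ.IsCycleOn (↑(Finset.univ : Finset β) : Set β)) :
    (permEndHom β σ).charpoly = X ^ Fintype.card β - 1 := by
  classical
  set m := Fintype.card β with hmdef
  have hm : 0 < m := Fintype.card_pos
  have hpow : ∀ (k : ℕ) (b : β), (σ ^ k) b = b ↔ m ∣ k := by
    intro k b
    simpa [Finset.card_univ] using hσ.pow_apply_eq (Finset.mem_univ b)
  have hσm : σ ^ m = 1 := by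
    ext b
    simpa using (hpow m b).mpr dvd_rfl
  set f := permEndHom β σ with hfdef
  have hfm : f ^ m = 1 := by rw [hfdef, ← map_pow, hσm, map_one]
  have hXm : (X ^ m - 1 : ℂ[X]).Monic := by
    simpa using monic_X_pow_sub_C (1 : ℂ) hm.ne'
  have hdvd1 : minpoly ℂ f ∣ X ^ m - 1 :=
    minpoly.dvd ℂ f (by rw [map_sub, map_pow, aeval_X, map_one, hfm, sub_self])
  have hqmonic : (minpoly ℂ f).Monic := minpoly.monic ⟨f.charpoly, f.charpoly_monic, f.aeval_self_charpoly⟩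
  -- degree lower bound
  obtain ⟨a⟩ := ‹Nonempty β›
  have hdist : ∀ i j : ℕ, i ≤ j → j < m → (σ ^ i) a = (σ ^ j) a → i = j := by
    intro i j hij hjm he
    have h1 : (σ ^ (j - i)) ((σ ^ i) a) = (σ ^ i) a := by
      rw [← Equiv.Perm.mul_apply, ← pow_add, Nat.sub_add_cancel hij, ← he]
    have h2 := Nat.eq_zero_of_dvd_of_lt ((hpow (j - i) _).mp h1) (by omega)
    omega
  have key : ∀ k : ℕ, (f ^ k) (Pi.single a 1) = Pi.single ((σ ^ k) a) (1 : ℂ) := by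
    intro k
    rw [hfdef, ← map_pow]
    funext x
    simp only [permEndHom, MonoidHom.coe_mk, OneHom.coe_mk, LinearMap.funLeft_apply,
      Function.comp_apply]
    by_cases hx : x = (σ ^ k) a
    · subst hx; rw [Equiv.Perm.inv_def, Equiv.symm_apply_apply, Pi.single_eq_same, Pi.single_eq_same]
    · rw [Pi.single_apply, Pi.single_apply, if_neg hx,
        if_neg (fun h => hx (by rw [← h]; simp))]
  have hdeg : m ≤ (minpoly ℂ f).natDegree := by
    by_contra hlt
    push_neg at hlt
    set q := minpoly ℂ f with hq
    have h0 : aeval f q = 0 := minpoly.aeval ℂ f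
    have hs := aeval_eq_sum_range (p := q) f
    rw [h0] at hs
    have h1 := congrFun (congrArg
      (fun g : Module.End ℂ (β → ℂ) => g (Pi.single a 1)) hs) ((σ ^ q.natDegree) a)
    simp only [LinearMap.zero_apply, Pi.zero_apply] at h1
    rw [LinearMap.coe_sum, Finset.sum_apply, Finset.sum_apply] at h1
    have h2 : ∀ i ∈ Finset.range (q.natDegree + 1),
        (q.coeff i • f ^ i) (Pi.single a 1) ((σ ^ q.natDegree) a)
          = if i = q.natDegree then q.coeff i else 0 := by
      intro i hi
      rw [Finset.mem_range] at hi
      rw [LinearMap.smul_apply, key i, Pi.smul_apply, smul_eq_mul, Pi.single_apply]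
      by_cases hc : (σ ^ q.natDegree) a = (σ ^ i) a
      · have : i = q.natDegree := by
          rcases le_or_gt i q.natDegree with h | h
          · exact hdist i q.natDegree h (by omega) hc.symm
          · omega
        rw [if_pos hc, if_pos this, mul_one]
      · rw [if_neg hc, if_neg (fun h => hc (by rw [h])), mul_zero]
    rw [Finset.sum_congr rfl h2, Finset.sum_ite_eq' _ _ _] at h1
    rw [if_pos (Finset.self_mem_range_succ _), hqmonic.coeff_natDegree] at h1
    exact one_ne_zero h1.symm
  have hqe : minpoly ℂ f = X ^ m - 1 :=
    (eq_of_monic_of_dvd_of_natDegree_le hqmonic hXm hdvd1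
      (by rw [show (1:ℂ[X]) = C 1 by simp, natDegree_X_pow_sub_C]; exact hdeg)).symm
  have hcpdeg : f.charpoly.natDegree = m := by
    rw [f.charpoly_natDegree, finrank_fintype_fun_eq_card]
  exact eq_of_monic_of_dvd_of_natDegree_le hXm f.charpoly_monic
    (hqe ▸ f.minpoly_dvd_charpoly) (by rw [show (1:ℂ[X]) = C 1 by simp, natDegree_X_pow_sub_C]; exact hcpdeg.le)


lemma permEnd_decomp (p : α → Prop) [DecidablePred p] (σ : Perm α)
    (h : ∀ x, p x ↔ p (σ x)) :
    (permEndHom α σ).charpoly =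
      (permEndHom {x // p x} (σ.subtypePerm (fun x => (h x).symm))).charpoly *
      (permEndHom {x // ¬ p x} (σ.subtypePerm (fun x => not_iff_not.mpr (h x).symm))).charpoly := by
  classical
  let E : (α → ℂ) ≃ₗ[ℂ] ({x // p x} → ℂ) × ({x // ¬ p x} → ℂ) :=
    (LinearEquiv.funCongrLeft ℂ ℂ (Equiv.sumCompl p)).trans
      (LinearEquiv.sumArrowLequivProdArrow _ _ ℂ ℂ)
  have key : E.conj (permEndHom α σ) =
      LinearMap.prodMap (permEndHom {x // p x} (σ.subtypePerm (fun x => (h x).symm)))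
        (permEndHom {x // ¬ p x} (σ.subtypePerm (fun x => not_iff_not.mpr (h x).symm))) := by
    apply LinearMap.ext
    intro v
    apply Prod.ext <;> funext x <;>
      simp [E, LinearEquiv.conj_apply, LinearMap.funLeft, LinearEquiv.funCongrLeft,
        Equiv.sumCompl, Equiv.Perm.subtypePerm_inv, LinearMap.funLeft_apply,
        permEndHom, Equiv.Perm.subtypePerm]
    · rw [dif_pos ((h (σ.symm ↑x)).mpr (by simpa using x.2))]
      rfl
    · rw [dif_neg (fun hp => x.2 (by simpa using (h (σ.symm ↑x)).mp hp))]
      rfl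
  rw [← LinearEquiv.charpoly_conj E, key, LinearMap.charpoly_prodMap]

theorem charpoly_permEnd (σ : Perm α) :
    (permEndHom α σ).charpoly =
      (X - 1) ^ (Fintype.card α - σ.support.card) *
        (σ.cycleType.map (fun ℓ => X ^ ℓ - 1)).prod := by
  classical
  induction σ using Equiv.Perm.cycle_induction_on with
  | base_one => rw [charpoly_permEnd_one]; simp
  | base_cycles σ hσ =>
    have h : ∀ x, (x ∈ σ.support) ↔ ((σ x) ∈ σ.support) :=
      fun x => (Equiv.Perm.apply_mem_support (f := σ) (x := x)).symm
    rw [permEnd_decomp (fun x => x ∈ σ.support) σ h]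
    have hco : σ.subtypePerm (p := fun x => x ∉ σ.support) (fun x => not_iff_not.mpr (h x).symm) = 1 := by
      ext x
      simp [Equiv.Perm.subtypePerm_apply,
        Equiv.Perm.notMem_support.mp x.2]
    have hcard : Fintype.card {x // x ∈ σ.support} = σ.support.card := Fintype.card_coe _
    have hcompl : Fintype.card {x // ¬ x ∈ σ.support} = Fintype.card α - σ.support.card := by
      rw [Fintype.card_subtype_compl, hcard]
    have : Nonempty {x // x ∈ σ.support} := by
      obtain ⟨a, ha⟩ := hσ.nonempty_support
      exact ⟨⟨a, ha⟩⟩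
    have hcyc : (σ.subtypePerm (fun x => (h x).symm)).IsCycleOn
        (↑(Finset.univ : Finset {x // x ∈ σ.support}) : Set _) := by
      have h1 : σ.IsCycleOn (↑σ.support : Set α) := by
        rw [Equiv.Perm.coe_support_eq_set_support]
        exact hσ.isCycleOn
      have h2 := h1.subtypePerm
      rw [Finset.coe_univ]
      exact h2
    have hc := charpoly_permEnd_cycleOn (σ.subtypePerm (fun x => (h x).symm)) hcyc
    rw [Fintype.card_coe] at hc
    rw [hco, charpoly_permEnd_one, hc, hcompl, hσ.cycleType]
    simp [mul_comm]
  | induction_disjoint σ τ hd hσ ihσ ihτ =>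
    have hpt : ∀ x, σ x = x ∨ τ x = x := hd
    have hXne : (X - 1 : ℂ[X]) ≠ 0 := by
      simpa using X_sub_C_ne_zero (1 : ℂ)
    have hτfix : ∀ x, x ∈ σ.support → τ x = x := by
      intro x hx
      rcases hpt x with h1 | h1
      · exact absurd h1 (Equiv.Perm.mem_support.mp hx)
      · exact h1
    have hτσ : ∀ x, x ∉ σ.support → τ x ∉ σ.support := by
      intro x hx
      rcases hpt (τ x) with h2 | h2
      · exact Equiv.Perm.notMem_support.mpr h2
      · rwa [τ.injective h2]
    -- the predicate is invariant under σ * τ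
    have hstm : ∀ x, x ∈ σ.support ↔ (σ * τ) x ∈ σ.support := by
      intro x
      rw [Equiv.Perm.mul_apply]
      by_cases hx : x ∈ σ.support
      · rw [hτfix x hx]
        exact Equiv.Perm.apply_mem_support.symm
      · have h2 := hτσ x hx
        rcases hpt (τ x) with h3 | h3
        · rw [h3]
          simp [hx, h2]
        · have h4 : τ x = x := τ.injective h3
          rw [h4]
          simp [hx, Equiv.Perm.apply_mem_support, Equiv.Perm.notMem_support.mp hx]
    have hσm : ∀ x, x ∈ σ.support ↔ σ x ∈ σ.support :=
      fun x => Equiv.Perm.apply_mem_support.symm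
    have hτm : ∀ x, x ∈ σ.support ↔ τ x ∈ σ.support := by
      intro x
      by_cases hx : x ∈ σ.support
      · rw [hτfix x hx]
      · simp [hx, hτσ x hx]
    -- identify restrictions
    have e1 : (σ * τ).subtypePerm (fun x => (hstm x).symm) = σ.subtypePerm (fun x => (hσm x).symm) := by
      ext x
      have h5 := hτfix x x.2
      simp [Equiv.Perm.subtypePerm_apply, Equiv.Perm.mul_apply, h5]
    have e2 : (σ * τ).subtypePerm (fun x => not_iff_not.mpr (hstm x).symm) =
        τ.subtypePerm (p := fun x => x ∉ σ.support) (fun x => not_iff_not.mpr (hτm x).symm) := by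
      ext x
      have h5 := Equiv.Perm.notMem_support.mp (hτσ x x.2)
      simp [Equiv.Perm.subtypePerm_apply, Equiv.Perm.mul_apply, h5]
    have cσ : σ.subtypePerm (p := fun x => x ∉ σ.support) (fun x => not_iff_not.mpr (hσm x).symm) = 1 := by
      ext x
      simp [Equiv.Perm.subtypePerm_apply, Equiv.Perm.notMem_support.mp x.2]
    have cτ : τ.subtypePerm (fun x => (hτm x).symm) = 1 := by
      ext x
      simp [Equiv.Perm.subtypePerm_apply, hτfix x x.2]
    rw [permEnd_decomp (fun x => x ∈ σ.support) (σ * τ) hstm, e1, e2]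
    have hcard : Fintype.card {x // x ∈ σ.support} = σ.support.card := Fintype.card_coe _
    have hcompl : Fintype.card {x // ¬ x ∈ σ.support} = Fintype.card α - σ.support.card := by
      rw [Fintype.card_subtype_compl, hcard]
    have dσ := permEnd_decomp (fun x => x ∈ σ.support) σ hσm
    rw [cσ, charpoly_permEnd_one, hcompl, ihσ] at dσ
    have hA := mul_right_cancel₀ (pow_ne_zero _ hXne) (dσ.symm.trans (mul_comm _ _))
    have dτ := permEnd_decomp (fun x => x ∈ σ.support) τ hτm
    rw [cτ, charpoly_permEnd_one, hcard, ihτ] at dτ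
    have hcards : σ.support.card + τ.support.card ≤ Fintype.card α := by
      rw [← hd.card_support_mul]
      exact Finset.card_le_univ _
    have hsplit : (X - 1 : ℂ[X]) ^ (Fintype.card α - τ.support.card) =
        (X - 1) ^ σ.support.card *
          (X - 1) ^ (Fintype.card α - σ.support.card - τ.support.card) := by
      rw [← pow_add]
      congr 1
      omega
    rw [hsplit, mul_assoc] at dτ
    have hB := (mul_left_cancel₀ (pow_ne_zero _ hXne) dτ).symm
    rw [hA, hB, hd.card_support_mul, Equiv.Perm.Disjoint.cycleType_mul hd, hσ.cycleType]
    simp only [Multiset.map_add, Multiset.prod_add, Multiset.map_singleton,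
      Multiset.prod_singleton, Multiset.coe_singleton]
    rw [show Fintype.card α - (σ.support.card + τ.support.card)
        = Fintype.card α - σ.support.card - τ.support.card by omega]
    ring

/-- Lemma: let `u ∈ S_n` act on `ℂⁿ` by its permutation matrix (the linear map
`v ↦ v ∘ u⁻¹`, which sends the standard basis vector `e_j` to `e_{u(j)}`), and let `ζ` be
a complex root of unity of multiplicative order `d ≥ 2`.  Then the algebraic multiplicity
of `ζ` as an eigenvalue of this linear map (its multiplicity as a root of the
characteristic polynomial) equals the number of cycles of `u` whose length is divisible
by `d` (since `d ≥ 2`, fixed points, which are omitted from `Equiv.Perm.cycleType`, never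
qualify). -/
theorem stmt9 (n : ℕ) (hn : 1 ≤ n) (u : Equiv.Perm (Fin n)) (d : ℕ) (hd : 2 ≤ d)
    (ζ : ℂ) (hζ1 : ζ ^ d = 1) (hζ2 : ∀ m : ℕ, 0 < m → m < d → ζ ^ m ≠ 1) :
    (LinearMap.charpoly
        (LinearMap.funLeft ℂ ℂ ⇑u⁻¹ : (Fin n → ℂ) →ₗ[ℂ] (Fin n → ℂ))).rootMultiplicity ζ =
      Multiset.card (u.cycleType.filter fun m => d ∣ m) := by
  classical
  have hζne : ζ ≠ 1 := fun h => hζ2 1 one_pos (by omega) (by simp [h])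
  have hdvd : ∀ ℓ : ℕ, ζ ^ ℓ = 1 ↔ d ∣ ℓ := by
    intro ℓ
    constructor
    · intro h
      by_contra hnd
      have hr : ℓ % d ≠ 0 := fun h0 => hnd (Nat.dvd_of_mod_eq_zero h0)
      have hmod : ζ ^ (ℓ % d) = 1 := by
        have : ζ ^ ℓ = (ζ ^ d) ^ (ℓ / d) * ζ ^ (ℓ % d) := by
          rw [← pow_mul, ← pow_add, Nat.div_add_mod]
        rw [this, hζ1, one_pow, one_mul] at h
        exact h
      exact hζ2 (ℓ % d) (Nat.pos_of_ne_zero hr) (Nat.mod_lt _ (by omega)) hmod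
    · rintro ⟨c, rfl⟩
      rw [pow_mul, hζ1, one_pow]
  have hsf : ∀ ℓ : ℕ, 0 < ℓ →
      rootMultiplicity ζ ((X : ℂ[X]) ^ ℓ - 1) = if d ∣ ℓ then 1 else 0 := by
    intro ℓ hℓ
    by_cases hdl : d ∣ ℓ
    · rw [if_pos hdl, ← count_roots]
      have hroots : ((X : ℂ[X]) ^ ℓ - 1).roots = nthRoots ℓ (1 : ℂ) := by
        rw [show (1 : ℂ[X]) = C 1 from (map_one C).symm]
        rfl
      rw [hroots]
      exact Multiset.count_eq_one_of_mem
        ((Complex.isPrimitiveRoot_exp ℓ hℓ.ne').nthRoots_one_nodup)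
        ((mem_nthRoots hℓ).mpr ((hdvd ℓ).mpr hdl))
    · rw [if_neg hdl, rootMultiplicity_eq_zero]
      intro h
      apply hdl
      apply (hdvd ℓ).mp
      have : ζ ^ ℓ - 1 = 0 := by simpa [IsRoot] using h
      linear_combination this
  have hmonic : ∀ s : Multiset ℕ, (∀ ℓ ∈ s, 0 < ℓ) →
      ((s.map fun ℓ => (X : ℂ[X]) ^ ℓ - 1).prod).Monic := by
    intro s hs
    apply monic_multiset_prod_of_monic
    intro ℓ hℓ
    simpa using monic_X_pow_sub_C (1 : ℂ) (hs ℓ hℓ).ne'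
  have hmain : ∀ s : Multiset ℕ, (∀ ℓ ∈ s, 0 < ℓ) →
      rootMultiplicity ζ ((s.map fun ℓ => (X : ℂ[X]) ^ ℓ - 1).prod) =
        Multiset.card (s.filter fun m => d ∣ m) := by
    intro s
    induction s using Multiset.induction_on with
    | empty =>
      intro _
      simp only [Multiset.map_zero, Multiset.prod_zero, Multiset.filter_zero,
        Multiset.card_zero]
      exact rootMultiplicity_eq_zero (by simp [IsRoot])
    | cons ℓ s ih =>
      intro hpos
      have hℓ : 0 < ℓ := hpos ℓ (Multiset.mem_cons_self ℓ s)
      have hs : ∀ x ∈ s, 0 < x := fun x hx => hpos x (Multiset.mem_cons_of_mem hx)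
      have hne : ((X : ℂ[X]) ^ ℓ - 1) * (s.map fun ℓ => (X : ℂ[X]) ^ ℓ - 1).prod ≠ 0 :=
        (((by simpa using monic_X_pow_sub_C (1 : ℂ) hℓ.ne' : ((X : ℂ[X]) ^ ℓ - 1).Monic)).mul
          (hmonic s hs)).ne_zero
      rw [Multiset.map_cons, Multiset.prod_cons, rootMultiplicity_mul hne,
        hsf ℓ hℓ, ih hs, Multiset.filter_cons]
      by_cases hdl : d ∣ ℓ <;> simp [hdl, add_comm]
  have hfix : (LinearMap.funLeft ℂ ℂ ⇑u⁻¹ : (Fin n → ℂ) →ₗ[ℂ] (Fin n → ℂ))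
      = permEndHom (Fin n) u := rfl
  rw [hfix, charpoly_permEnd u]
  have hpos : ∀ ℓ ∈ u.cycleType, 0 < ℓ := fun ℓ hℓ =>
    lt_of_lt_of_le two_pos (Equiv.Perm.two_le_of_mem_cycleType hℓ)
  have hXm : ((X - 1 : ℂ[X]) ^ (Fintype.card (Fin n) - u.support.card)).Monic := by
    apply Monic.pow
    simpa using monic_X_sub_C (1 : ℂ)
  have hne : ((X - 1 : ℂ[X]) ^ (Fintype.card (Fin n) - u.support.card) *
      (u.cycleType.map fun ℓ => (X : ℂ[X]) ^ ℓ - 1).prod) ≠ 0 :=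
    (hXm.mul (hmonic _ hpos)).ne_zero
  rw [rootMultiplicity_mul hne, hmain u.cycleType hpos]
  have h0 : rootMultiplicity ζ
      ((X - 1 : ℂ[X]) ^ (Fintype.card (Fin n) - u.support.card)) = 0 :=
    rootMultiplicity_eq_zero (fun h =>
      pow_ne_zero _ (sub_ne_zero.mpr hζne) (by simpa [IsRoot] using h))
  rw [h0, zero_add]
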